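/- The entries π^l_i = (min(i, l, K-i) + 1)/((l+1)(K+1-l)) for i = 0,...,K sum to 1, provided 1 ≤ l and 2l ≤ K. -/

import Mathlib

lemma gauss1 (n : ℕ) : ∑ i ∈ Finset.range n, (i + 1) = n * (n + 1) / 2 := by
  induction n with
  | zero => simp
  | succ k ih =>
    rw [Finset.sum_range_succ, ih]
    have : (k + 1) * (k + 1 + 1) = k * (k + 1) + 2 * (k + 1) := by ring
    omega

lemma gauss2 (n : ℕ) : ∑ i ∈ Finset.range n, (n - i) = n * (n + 1) / 2 := by
  have h : ∑ i ∈ Finset.range n, (n - i) = ∑ i ∈ Finset.range n, (n - 1 - i + 1) := by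
    apply Finset.sum_congr rfl; intro i hi; simp only [Finset.mem_range] at hi; omega
  rw [h, Finset.sum_range_reflect (fun i => i + 1) n, gauss1]

lemma key (K l : ℕ) (hl : 1 ≤ l) (hlK : 2 * l ≤ K) :
    ∑ i ∈ Finset.range (K + 1), (min i (min l (K - i)) + 1) = (l + 1) * (K + 1 - l) := by
  obtain ⟨m, rfl⟩ : ∃ m, K = 2 * l + m := ⟨K - 2 * l, by omega⟩
  set K := 2 * l + m with hK
  rw [Finset.range_eq_Ico,
      ← Finset.sum_Ico_consecutive _ (Nat.zero_le l) (by omega : l ≤ K + 1),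
      ← Finset.sum_Ico_consecutive _ (by omega : l ≤ K + 1 - l) (by omega : K + 1 - l ≤ K + 1)]
  have e1 : ∑ i ∈ Finset.Ico 0 l, (min i (min l (K - i)) + 1) =
      ∑ i ∈ Finset.Ico 0 l, (i + 1) := by
    apply Finset.sum_congr rfl
    intro i hi; simp only [Finset.mem_Ico] at hi; omega
  have e2 : ∑ i ∈ Finset.Ico l (K + 1 - l), (min i (min l (K - i)) + 1) =
      ∑ _i ∈ Finset.Ico l (K + 1 - l), (l + 1) := by
    apply Finset.sum_congr rfl
    intro i hi; simp only [Finset.mem_Ico] at hi; omega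
  have e3 : ∑ i ∈ Finset.Ico (K + 1 - l) (K + 1), (min i (min l (K - i)) + 1) =
      ∑ i ∈ Finset.Ico (K + 1 - l) (K + 1), (K + 1 - i) := by
    apply Finset.sum_congr rfl
    intro i hi; simp only [Finset.mem_Ico] at hi; omega
  rw [e1, e2, e3]
  have g1 : ∑ i ∈ Finset.Ico 0 l, (i + 1) = l * (l + 1) / 2 := by
    rw [← Finset.range_eq_Ico]; exact gauss1 l
  have g3 : ∑ i ∈ Finset.Ico (K + 1 - l) (K + 1), (K + 1 - i) = l * (l + 1) / 2 := by
    rw [Finset.sum_Ico_eq_sum_range]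
    have hr : K + 1 - (K + 1 - l) = l := by omega
    rw [hr]
    have : ∀ j ∈ Finset.range l, K + 1 - (K + 1 - l + j) = l - j := by
      intro j hj; simp only [Finset.mem_range] at hj; omega
    rw [Finset.sum_congr rfl this]
    exact gauss2 l
  rw [g1, g3, Finset.sum_const, Nat.card_Ico, smul_eq_mul]
  have h2 : 2 * (l * (l + 1) / 2) = l * (l + 1) := by
    obtain ⟨c, hc⟩ := Nat.even_mul_succ_self l
    omega
  have hm1 : K + 1 - l - l = m + 1 := by omega
  have hm2 : K + 1 - l = l + m + 1 := by omega
  rw [hm1, hm2]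
  nlinarith [h2]

/-- The entries of the stationary distribution sum to one. -/
theorem stmt_3 (K l : ℕ) (hl : 1 ≤ l) (hlK : 2 * l ≤ K) :
    ∑ i ∈ Finset.range (K + 1),
      ((min i (min l (K - i)) : ℚ) + 1) / (((l : ℚ) + 1) * ((K : ℚ) + 1 - l)) = 1 := by
  have h1 : (1 : ℚ) ≤ (l : ℚ) := by exact_mod_cast hl
  have h2 : 2 * (l : ℚ) ≤ (K : ℚ) := by exact_mod_cast hlK
  have hD : ((l : ℚ) + 1) * ((K : ℚ) + 1 - l) ≠ 0 := by
    apply mul_ne_zero <;> intro h <;> nlinarith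
  rw [← Finset.sum_div, div_eq_one_iff_eq hD]
  have hc : ∑ i ∈ Finset.range (K + 1), ((min i (min l (K - i)) : ℚ) + 1) =
      ((∑ i ∈ Finset.range (K + 1), (min i (min l (K - i)) + 1) : ℕ) : ℚ) := by
    push_cast
    apply Finset.sum_congr rfl
    intro i hi
    simp only [Finset.mem_range] at hi
    rw [Nat.cast_sub (by omega : i ≤ K)]
  rw [hc, key K l hl hlK]
  push_cast [Nat.cast_sub (show l ≤ K + 1 by omega)]
  ring
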